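/- Under the hypotheses of the effective-field construction (a(·,x) strongly monotone with constant λ and L-Lipschitz uniformly in x on a probability space (X,μ); correctors w_p ∈ L²(X;ℝ^d) with mean zero satisfying ∫_X (a(w_p+p)−a(w_q+q))·(w_p−w_q) dμ = 0 for all p,q; ā(p) = ∫_X a(w_p+p) dμ), the map ā is Lipschitz continuous: there is a constant C depending only on λ and L such that |ā(p)−ā(q)| ≤ C|p−q| for all p, q ∈ ℝ^d; moreover ‖w_p − w_q‖_{L²(X)} ≤ C|p−q|. -/

import Mathlib

open MeasureTheory
open scoped InnerProductSpace

private lemma integrable_inner_of_mem2 {X : Type*} [MeasurableSpace X] {μ : Measure X}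
    {E : Type*} [NormedAddCommGroup E] [InnerProductSpace ℝ E]
    {f g : X → E} (hf : MemLp f 2 μ) (hg : MemLp g 2 μ) :
    Integrable (fun x => ⟪f x, g x⟫_ℝ) μ := by
  refine Integrable.mono'
    ((hf.norm.integrable_sq.add hg.norm.integrable_sq).div_const 2)
    (hf.aestronglyMeasurable.inner hg.aestronglyMeasurable)
    (Filter.Eventually.of_forall fun x => ?_)
  have h1 : |⟪f x, g x⟫_ℝ| ≤ ‖f x‖ * ‖g x‖ := abs_real_inner_le_norm _ _
  have h2 : ‖f x‖ * ‖g x‖ ≤ (‖f x‖ ^ 2 + ‖g x‖ ^ 2) / 2 := by nlinarith [sq_nonneg (‖f x‖ - ‖g x‖)]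
  calc ‖⟪f x, g x⟫_ℝ‖ = |⟪f x, g x⟫_ℝ| := rfl
    _ ≤ (‖f x‖ ^ 2 + ‖g x‖ ^ 2) / 2 := h1.trans h2

private lemma sq_integral_le {X : Type*} [MeasurableSpace X] {μ : Measure X}
    [IsProbabilityMeasure μ] {h : X → ℝ} (hh : MemLp h 2 μ) :
    (∫ x, h x ∂μ) ^ 2 ≤ ∫ x, (h x) ^ 2 ∂μ := by
  have := ProbabilityTheory.variance_nonneg h μ
  rw [ProbabilityTheory.variance_eq_sub hh] at this
  simpa using le_of_sub_nonneg this

set_option maxHeartbeats 1000000 in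
theorem stmt_12 (d : ℕ) (hd : 1 ≤ d)
    {X : Type*} [MeasurableSpace X] (μ : Measure X) [IsProbabilityMeasure μ]
    (lam L : ℝ) (hlam : 0 < lam) (hL : 0 < L)
    (a : EuclideanSpace ℝ (Fin d) → X → EuclideanSpace ℝ (Fin d))
    (hmeas : ∀ p, Measurable (a p))
    (hmono : ∀ x p q, lam * ‖p - q‖ ^ 2 ≤ ⟪a p x - a q x, p - q⟫_ℝ)
    (hlip : ∀ x p q, ‖a p x - a q x‖ ≤ L * ‖p - q‖)
    (w : EuclideanSpace ℝ (Fin d) → X → EuclideanSpace ℝ (Fin d))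
    (hw2 : ∀ p, MemLp (w p) 2 μ)
    (hwmean : ∀ p, ∫ x, w p x ∂μ = 0)
    (hint : ∀ p, Integrable (fun x => a (w p x + p) x) μ)
    (horth : ∀ p q,
      ∫ x, ⟪a (w p x + p) x - a (w q x + q) x, w p x - w q x⟫_ℝ ∂μ = 0)
    (abar : EuclideanSpace ℝ (Fin d) → EuclideanSpace ℝ (Fin d))
    (habar : ∀ p, abar p = ∫ x, a (w p x + p) x ∂μ) :
    ∃ C : ℝ, 0 < C ∧ ∀ p q,
      ‖abar p - abar q‖ ≤ C * ‖p - q‖ ∧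
      (∫ x, ‖w p x - w q x‖ ^ 2 ∂μ) ^ ((1:ℝ)/2) ≤ C * ‖p - q‖ := by
  refine ⟨L ^ 2 / lam + L / lam + 1, by positivity, fun p q => ?_⟩
  set f : X → EuclideanSpace ℝ (Fin d) :=
    fun x => a (w p x + p) x - a (w q x + q) x with hf_def
  set e : X → EuclideanSpace ℝ (Fin d) := fun x => w p x - w q x with he_def
  set g : X → EuclideanSpace ℝ (Fin d) := fun x => e x + (p - q) with hg_def
  have hge : ∀ x, g x = (w p x + p) - (w q x + q) := fun x => by
    simp only [hg_def, he_def]; abel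
  have he2 : MemLp e 2 μ := (hw2 p).sub (hw2 q)
  have hg2 : MemLp g 2 μ := he2.add (memLp_const _)
  have hfint : Integrable f μ := (hint p).sub (hint q)
  -- pointwise Lipschitz bound
  have hfg : ∀ x, ‖f x‖ ≤ L * ‖g x‖ := fun x => by
    rw [hge x]; exact hlip x _ _
  have hf2 : MemLp f 2 μ := by
    refine MemLp.of_le (hg2.norm.const_mul L) hfint.aestronglyMeasurable
      (Filter.Eventually.of_forall fun x => ?_)
    calc ‖f x‖ ≤ L * ‖g x‖ := hfg x
      _ ≤ ‖L * ‖g x‖‖ := le_abs_self _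
  -- pointwise monotonicity
  have hmono' : ∀ x, lam * ‖g x‖ ^ 2 ≤ ⟪f x, g x⟫_ℝ := fun x => by
    have := hmono x (w p x + p) (w q x + q)
    rw [← hge x] at this; exact this
  -- integrability of inner products
  have hifg : Integrable (fun x => ⟪f x, g x⟫_ℝ) μ := integrable_inner_of_mem2 hf2 hg2
  have hife : Integrable (fun x => ⟪f x, e x⟫_ℝ) μ := integrable_inner_of_mem2 hf2 he2
  have hifc : Integrable (fun x => ⟪f x, (p - q : EuclideanSpace ℝ (Fin d))⟫_ℝ) μ :=
    hfint.inner_const _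
  -- key identity
  have hΔ : ∫ x, f x ∂μ = abar p - abar q := by
    rw [habar p, habar q, hf_def, integral_sub (hint p) (hint q)]
  have hkey : ∫ x, ⟪f x, g x⟫_ℝ ∂μ = ⟪abar p - abar q, p - q⟫_ℝ := by
    have hsplit : ∀ x, ⟪f x, g x⟫_ℝ = ⟪f x, e x⟫_ℝ + ⟪f x, (p - q : EuclideanSpace ℝ (Fin d))⟫_ℝ :=
      fun x => by rw [hg_def]; exact inner_add_right _ _ _
    rw [integral_congr_ae (Filter.Eventually.of_forall hsplit),
      integral_add hife hifc]
    have h0 : ∫ x, ⟪f x, e x⟫_ℝ ∂μ = 0 := horth p q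
    have h1 : ∫ x, ⟪f x, (p - q : EuclideanSpace ℝ (Fin d))⟫_ℝ ∂μ
        = ⟪abar p - abar q, p - q⟫_ℝ := by
      simp_rw [real_inner_comm]
      rw [integral_inner hfint, hΔ, real_inner_comm]
    rw [h0, h1, zero_add]
  -- the L² quantity S
  set S2 : ℝ := ∫ x, ‖g x‖ ^ 2 ∂μ with hS2_def
  have hS2int : Integrable (fun x => ‖g x‖ ^ 2) μ := hg2.norm.integrable_sq
  have hS2nn : 0 ≤ S2 := integral_nonneg fun x => sq_nonneg _
  set S : ℝ := Real.sqrt S2 with hS_def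
  have hSnn : 0 ≤ S := Real.sqrt_nonneg _
  have hSsq : S ^ 2 = S2 := Real.sq_sqrt hS2nn
  -- ∫ ‖g‖ ≤ S
  have hgint : Integrable (fun x => ‖g x‖) μ := hg2.norm.integrable one_le_two
  have hgL1 : ∫ x, ‖g x‖ ∂μ ≤ S := by
    have h1 : (∫ x, ‖g x‖ ∂μ) ^ 2 ≤ S2 := sq_integral_le hg2.norm
    have h2 : 0 ≤ ∫ x, ‖g x‖ ∂μ := integral_nonneg fun x => norm_nonneg _
    rw [hS_def]
    calc ∫ x, ‖g x‖ ∂μ = Real.sqrt ((∫ x, ‖g x‖ ∂μ) ^ 2) := (Real.sqrt_sq h2).symm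
      _ ≤ Real.sqrt S2 := Real.sqrt_le_sqrt h1
  -- ‖Δ‖ ≤ L * S
  have hΔle : ‖abar p - abar q‖ ≤ L * S := by
    rw [← hΔ]
    calc ‖∫ x, f x ∂μ‖ ≤ ∫ x, ‖f x‖ ∂μ := norm_integral_le_integral_norm _
      _ ≤ ∫ x, L * ‖g x‖ ∂μ := integral_mono hfint.norm (hgint.const_mul L) hfg
      _ = L * ∫ x, ‖g x‖ ∂μ := integral_const_mul _ _
      _ ≤ L * S := by nlinarith
  -- λ S² ≤ ⟪Δ, p-q⟫
  have hlow : lam * S2 ≤ ‖abar p - abar q‖ * ‖p - q‖ := by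
    have h1 : lam * S2 ≤ ∫ x, ⟪f x, g x⟫_ℝ ∂μ := by
      rw [hS2_def, ← integral_const_mul]
      exact integral_mono (hS2int.const_mul lam) hifg hmono'
    calc lam * S2 ≤ ⟪abar p - abar q, p - q⟫_ℝ := hkey ▸ h1
      _ ≤ ‖abar p - abar q‖ * ‖p - q‖ := real_inner_le_norm _ _
  -- S ≤ (L/λ)|p-q|
  have hSle : S ≤ L / lam * ‖p - q‖ := by
    have h1 : lam * S ^ 2 ≤ L * S * ‖p - q‖ := by
      rw [hSsq]
      calc lam * S2 ≤ ‖abar p - abar q‖ * ‖p - q‖ := hlow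
        _ ≤ L * S * ‖p - q‖ := by
          have := norm_nonneg (p - q : EuclideanSpace ℝ (Fin d))
          nlinarith
    rcases eq_or_lt_of_le hSnn with h | h
    · rw [← h]; positivity
    · rw [div_mul_eq_mul_div, le_div_iff₀ hlam]
      have := mul_le_mul_of_nonneg_left h1 (le_of_lt (by positivity : (0:ℝ) < S⁻¹))
      nlinarith
  have hnp : (0:ℝ) ≤ ‖p - q‖ := norm_nonneg _
  constructor
  · calc ‖abar p - abar q‖ ≤ L * S := hΔle
      _ ≤ L * (L / lam * ‖p - q‖) := mul_le_mul_of_nonneg_left hSle hL.le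
      _ = L ^ 2 / lam * ‖p - q‖ := by ring
      _ ≤ (L ^ 2 / lam + L / lam + 1) * ‖p - q‖ := by
          have h1 : 0 ≤ L / lam := by positivity
          have h2 : L ^ 2 / lam ≤ L ^ 2 / lam + L / lam + 1 := by linarith
          exact mul_le_mul_of_nonneg_right h2 hnp
  · -- bound on (∫ ‖e‖²)^(1/2)
    set E2 : ℝ := ∫ x, ‖w p x - w q x‖ ^ 2 ∂μ with hE2_def
    have hE2int : Integrable (fun x => ‖w p x - w q x‖ ^ 2) μ := by
      have := he2.norm.integrable_sq
      simpa [he_def] using this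
    have hE2nn : 0 ≤ E2 := integral_nonneg fun x => sq_nonneg _
    have hE2le : E2 ≤ (S + ‖p - q‖) ^ 2 := by
      have hpt : ∀ x, ‖w p x - w q x‖ ^ 2
          ≤ ‖g x‖ ^ 2 + 2 * ‖p - q‖ * ‖g x‖ + ‖p - q‖ ^ 2 := fun x => by
        have h1 : ‖w p x - w q x‖ ≤ ‖g x‖ + ‖p - q‖ := by
          have : w p x - w q x = g x - (p - q) := by simp [hg_def, he_def]
          rw [this]
          exact (norm_sub_le _ _)
        calc ‖w p x - w q x‖ ^ 2 ≤ (‖g x‖ + ‖p - q‖) ^ 2 :=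
              pow_le_pow_left₀ (norm_nonneg _) h1 2
          _ = ‖g x‖ ^ 2 + 2 * ‖p - q‖ * ‖g x‖ + ‖p - q‖ ^ 2 := by ring
      have hRint : Integrable
          (fun x => ‖g x‖ ^ 2 + 2 * ‖p - q‖ * ‖g x‖ + ‖p - q‖ ^ 2) μ :=
        (hS2int.add (hgint.const_mul _)).add (integrable_const _)
      calc E2 ≤ ∫ x, (‖g x‖ ^ 2 + 2 * ‖p - q‖ * ‖g x‖ + ‖p - q‖ ^ 2) ∂μ :=
            integral_mono hE2int hRint hpt
        _ = S2 + 2 * ‖p - q‖ * (∫ x, ‖g x‖ ∂μ) + ‖p - q‖ ^ 2 := by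
            have hadd1 : Integrable (fun x => ‖g x‖ ^ 2 + 2 * ‖p - q‖ * ‖g x‖) μ :=
              hS2int.add (hgint.const_mul _)
            rw [integral_add hadd1 (integrable_const _),
              integral_add hS2int (hgint.const_mul _), integral_const_mul, integral_const]
            simp [hS2_def]
        _ ≤ S2 + 2 * ‖p - q‖ * S + ‖p - q‖ ^ 2 := by
            have h2 : 2 * ‖p - q‖ * (∫ x, ‖g x‖ ∂μ) ≤ 2 * ‖p - q‖ * S :=
              mul_le_mul_of_nonneg_left hgL1 (by positivity)
            linarith
        _ = (S + ‖p - q‖) ^ 2 := by rw [← hSsq]; ring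
    have hEs : E2 ^ ((1:ℝ)/2) = Real.sqrt E2 := (Real.sqrt_eq_rpow E2).symm
    rw [hEs]
    have h1 : Real.sqrt E2 ≤ S + ‖p - q‖ := by
      have := Real.sqrt_le_sqrt hE2le
      rwa [Real.sqrt_sq (add_nonneg hSnn hnp)] at this
    calc Real.sqrt E2 ≤ S + ‖p - q‖ := h1
      _ ≤ L / lam * ‖p - q‖ + ‖p - q‖ := by linarith
      _ = (L / lam + 1) * ‖p - q‖ := by ring
      _ ≤ (L ^ 2 / lam + L / lam + 1) * ‖p - q‖ := by
          have h2 : 0 ≤ L ^ 2 / lam := by positivity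
          have h3 : L / lam + 1 ≤ L ^ 2 / lam + L / lam + 1 := by linarith
          exact mul_le_mul_of_nonneg_right h3 hnp
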